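/- Let k ≥ 2 be an integer. Every induced path of length at least six in Ĝ_k is contained in a single component: if (a_0, b_0), (a_1, b_1), …, (a_n, b_n) with n ≥ 6 is an induced path in Ĝ_k, then a_0 = a_1 = … = a_n. -/

import Mathlib

open SimpleGraph

/-- An induced path of length `n` in `G`: an injective sequence of `n+1` vertices,
adjacent exactly when consecutive. -/
def IsInducedPath {V : Type*} (G : SimpleGraph V) {n : ℕ} (x : Fin (n + 1) → V) : Prop :=
  Function.Injective x ∧ ∀ i j, G.Adj (x i) (x j) ↔ Nat.dist i.val j.val = 1

/-- `G` contains finite induced paths of unbounded length. -/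
def HasUnboundedPaths {V : Type*} (G : SimpleGraph V) : Prop :=
  ∀ n : ℕ, ∃ x : Fin (n + 1) → V, IsInducedPath G x

/-- `G` is path-minimal. -/
def PathMinimal {V : Type*} (G : SimpleGraph V) : Prop :=
  HasUnboundedPaths G ∧
    ∀ A : Set V, HasUnboundedPaths (G.induce A) → Nonempty (G ↪g G.induce A)

/-- The age of `G` is contained in the age of `H`. -/
def AgeSubset {V W : Type*} (G : SimpleGraph V) (H : SimpleGraph W) : Prop :=
  ∀ (n : ℕ) (F : SimpleGraph (Fin n)), Nonempty (F ↪g G) → Nonempty (F ↪g H)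

/-- The age of `G` contains no infinite antichain for embeddability. -/
def AgeWQO {V : Type*} (G : SimpleGraph V) : Prop :=
  ∀ f : ℕ → Σ n : ℕ, SimpleGraph (Fin n),
    (∀ i, Nonempty ((f i).2 ↪g G)) →
    ∃ i j, i ≠ j ∧ Nonempty ((f i).2 ↪g (f j).2)

/-- The set `A` carries an induced path of length `n` of `G` (covering all of `A`). -/
def IsPathOn {V : Type*} (G : SimpleGraph V) (A : Set V) (n : ℕ) : Prop :=
  ∃ x : Fin (n + 1) → V, Function.Injective x ∧ Set.range x = A ∧
    ∀ i j, G.Adj (x i) (x j) ↔ Nat.dist i.val j.val = 1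

/-- `G` embeds a direct sum of finite induced paths of unbounded length. -/
def EmbedsDirectSumOfPaths {V : Type*} (G : SimpleGraph V) : Prop :=
  ∃ A : ℕ → Set V, (∀ n, (A n).Finite) ∧
    (∀ m n, m ≠ n → Disjoint (A m) (A n)) ∧
    (∀ m n, m ≠ n → ∀ x ∈ A m, ∀ y ∈ A n, ¬ G.Adj x y) ∧
    ∀ n, ∃ m, n ≤ m ∧ IsPathOn G (A n) m

/-- `G` embeds a complete sum of finite induced paths of unbounded length. -/
def EmbedsCompleteSumOfPaths {V : Type*} (G : SimpleGraph V) : Prop :=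
  ∃ A : ℕ → Set V, (∀ n, (A n).Finite) ∧
    (∀ m n, m ≠ n → Disjoint (A m) (A n)) ∧
    (∀ m n, m ≠ n → ∀ x ∈ A m, ∀ y ∈ A n, G.Adj x y) ∧
    ∀ n, ∃ m, n ≤ m ∧ IsPathOn G (A n) m

/-- An isometric path of length `n` in `G`. -/
def IsIsometricPath {V : Type*} (G : SimpleGraph V) {n : ℕ} (x : Fin (n + 1) → V) : Prop :=
  (∀ i : Fin n, G.Adj (x i.castSucc) (x i.succ)) ∧
  ∀ i j, G.dist (x i) (x j) = Nat.dist i.val j.val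

/-- The set `A` carries an induced path of length `n` of `G` which is isometric in `G`. -/
def IsIsometricPathOn {V : Type*} (G : SimpleGraph V) (A : Set V) (n : ℕ) : Prop :=
  ∃ x : Fin (n + 1) → V, Function.Injective x ∧ Set.range x = A ∧
    (∀ i j, G.Adj (x i) (x j) ↔ Nat.dist i.val j.val = 1) ∧
    (∀ i j, G.dist (x i) (x j) = Nat.dist i.val j.val)

/-- The incomparability graph of a poset. -/
def incGraph (α : Type*) [PartialOrder α] : SimpleGraph α where
  Adj a b := ¬ a ≤ b ∧ ¬ b ≤ a
  symm := ⟨fun _ _ h => ⟨h.2, h.1⟩⟩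
  loopless := ⟨fun _ h => h.1 le_rfl⟩

/-- `w` is a (finite) factor of the infinite word `u`. -/
def IsFactor {A : Type*} (u : ℕ → A) (w : List A) : Prop :=
  ∃ p : ℕ, w = (List.range w.length).map fun i => u (p + i)

/-- `u` is uniformly recurrent. -/
def UniformlyRecurrent {A : Type*} (u : ℕ → A) : Prop :=
  ∀ n : ℕ, ∃ m : ℕ, ∀ v w : List A, IsFactor u v → IsFactor u w →
    v.length = n → w.length = m → v <:+: w

/-- The set of factors of `u` is inexhaustible. -/
def Inexhaustible {A : Type*} (u : ℕ → A) : Prop :=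
  ∀ v v' : List A, IsFactor u v → IsFactor u v' → ∃ w : List A, IsFactor u (v ++ w ++ v')

/-- The path on `n` vertices. -/
def pathG (n : ℕ) : SimpleGraph (Fin n) where
  Adj i j := Nat.dist i.val j.val = 1
  symm := ⟨fun i j h => by rwa [Nat.dist_comm]⟩
  loopless := ⟨fun i h => by simp [Nat.dist_self] at h⟩

/-- The graph `Ĝ_k` on `ℕ × ℕ`. -/
def Ghat (k : ℕ) : SimpleGraph (ℕ × ℕ) where
  Adj a b := (a.1 = b.1 ∧ Nat.dist a.2 b.2 = 1) ∨ (a.1 ≠ b.1 ∧ ¬ a.2 ≡ b.2 [MOD k])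
  symm := by
    refine ⟨?_⟩
    intro a b h
    rcases h with ⟨h1, h2⟩ | ⟨h1, h2⟩
    · exact Or.inl ⟨h1.symm, by rwa [Nat.dist_comm]⟩
    · exact Or.inr ⟨h1.symm, fun h => h2 h.symm⟩
  loopless := by
    refine ⟨?_⟩
    intro a h
    rcases h with ⟨_, h2⟩ | ⟨h1, _⟩
    · simp [Nat.dist_self] at h2
    · exact h1 rfl

/-- The vertex set of `Q̂_k`. -/
def Qset : Set (ℕ × ℕ) := {p : ℕ × ℕ | p.2 < p.1 + 5}

/-- The graph `Q̂_k`, induced by `Ĝ_k` on `Qset`. -/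
def Qhat (k : ℕ) : SimpleGraph Qset := (Ghat k).induce Qset

/-- `M` is a module (autonomous set) of `G`. -/
def IsModule {V : Type*} (G : SimpleGraph V) (M : Set V) : Prop :=
  ∀ v ∉ M, (∀ x ∈ M, G.Adj v x) ∨ (∀ x ∈ M, ¬ G.Adj v x)

/-- A trivial subset of a vertex set: empty, a singleton, or everything. -/
def IsTrivialSet {V : Type*} (M : Set V) : Prop :=
  M = ∅ ∨ (∃ v, M = {v}) ∨ M = Set.univ

/-- The graph `Ĝ_{u,⊕}` associated with the word `u : ℕ → Bool` and the Boolean sum. -/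
def GhatXor (u : ℕ → Bool) : SimpleGraph (ℕ × ℕ) where
  Adj a b := (a.1 = b.1 ∧ Nat.dist a.2 b.2 = 1) ∨ (a.1 ≠ b.1 ∧ u a.2 ≠ u b.2)
  symm := by
    refine ⟨?_⟩
    intro a b h
    rcases h with ⟨h1, h2⟩ | ⟨h1, h2⟩
    · exact Or.inl ⟨h1.symm, by rwa [Nat.dist_comm]⟩
    · exact Or.inr ⟨h1.symm, h2.symm⟩
  loopless := by
    refine ⟨?_⟩
    intro a h
    rcases h with ⟨_, h2⟩ | ⟨h1, _⟩
    · simp [Nat.dist_self] at h2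
    · exact h1 rfl

/-- The graph `Ĝ_{u,π₂}` associated with the word `u : ℕ → Bool` and the second projection. -/
def GhatPi2 (u : ℕ → Bool) : SimpleGraph (ℕ × ℕ) where
  Adj a b := (a.1 = b.1 ∧ Nat.dist a.2 b.2 = 1) ∨
    (a.1 < b.1 ∧ u b.2 = true) ∨ (b.1 < a.1 ∧ u a.2 = true)
  symm := by
    refine ⟨?_⟩
    intro a b h
    rcases h with ⟨h1, h2⟩ | ⟨h1, h2⟩ | ⟨h1, h2⟩
    · exact Or.inl ⟨h1.symm, by rwa [Nat.dist_comm]⟩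
    · exact Or.inr (Or.inr ⟨h1, h2⟩)
    · exact Or.inr (Or.inl ⟨h1, h2⟩)
  loopless := by
    refine ⟨?_⟩
    intro a h
    rcases h with ⟨_, h2⟩ | ⟨h1, _⟩ | ⟨h1, _⟩
    · simp [Nat.dist_self] at h2
    · exact lt_irrefl _ h1
    · exact lt_irrefl _ h1

/-- `u` has a constant factor of length `m`. -/
def HasConstFactor (u : ℕ → Bool) (m : ℕ) : Prop :=
  ∃ p : ℕ, ∀ i < m, u (p + i) = u p

private lemma typ' {aj ai ai1 rj ri ri1 : ℕ} (u : aj = ai ∨ rj = ri)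
    (v : aj = ai1 ∨ rj = ri1) (hc : ai ≠ ai1) (hpq : ri ≠ ri1) :
    (aj = ai ∧ rj = ri1) ∨ (aj = ai1 ∧ rj = ri) := by omega

private lemma farL1 {c1 r1 c2 r2 cg rg cA cB p q : ℕ}
    (hc : cA ≠ cB) (hpq : p ≠ q)
    (t1 : (c1 = cA ∧ r1 = q) ∨ (c1 = cB ∧ r1 = p))
    (t2 : (c2 = cA ∧ r2 = q) ∨ (c2 = cB ∧ r2 = p))
    (tg : (cg = cA ∧ rg = q) ∨ (cg = cB ∧ rg = p))
    (e12 : r1 ≠ r2)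
    (h1g : c1 = cg ∨ r1 = rg) (h2g : c2 = cg ∨ r2 = rg) : False := by omega

private lemma farL2 {c0 r0 c3 r3 c4 r4 c5 r5 c6 r6 cA cB p q : ℕ}
    (hc : cA ≠ cB) (hpq : p ≠ q)
    (t4 : (c4 = cA ∧ r4 = q) ∨ (c4 = cB ∧ r4 = p))
    (t5 : (c5 = cA ∧ r5 = q) ∨ (c5 = cB ∧ r5 = p))
    (t6 : (c6 = cA ∧ r6 = q) ∨ (c6 = cB ∧ r6 = p))
    (h46 : c4 = c6 ∨ r4 = r6)
    (h13 : c3 = cA ∨ r3 = p)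
    (h35 : c3 = c5 ∨ r3 = r5)
    (h36 : c3 = c6 ∨ r3 = r6)
    (h02 : c0 = cB ∨ r0 = q)
    (h03 : c0 = c3 ∨ r0 = r3)
    (h04 : c0 = c4 ∨ r0 = r4)
    (h05 : c0 = c5 ∨ r0 = r5)
    (e3 : r3 ≠ r4) (e4 : r4 ≠ r5) : False := by
  rcases t4 with ⟨hc4, hr4⟩ | ⟨hc4, hr4⟩
  · obtain ⟨hc5, hr5⟩ : c5 = cB ∧ r5 = p := by
      clear t6 h46 h13 h35 h36 h02 h03 h04 h05 e3; omega
    obtain ⟨hc6, hr6⟩ : c6 = cA ∧ r6 = q := by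
      clear t5 h13 h35 h36 h02 h03 h04 h05 e3 e4; omega
    clear t5 t6 h46
    have w0 : r0 = q := by clear h13 h35 h36 h03 h05 e3 e4; omega
    have w0c : c0 = cB := by clear h13 h35 h36 h03 h02 h04 e3 e4; omega
    have w3 : c3 = cA := by clear h35 h02 h03 h04 h05 e3 e4 w0 w0c; omega
    have w3r : r3 = p := by clear h13 h36 h02 h03 h04 h05 e3 e4 w0 w0c; omega
    clear h13 h35 h36 h02 h04 h05 e3 e4
    omega
  · obtain ⟨hc5, hr5⟩ : c5 = cA ∧ r5 = q := by
      clear t6 h46 h13 h35 h36 h02 h03 h04 h05 e3; omega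
    obtain ⟨hc6, hr6⟩ : c6 = cB ∧ r6 = p := by
      clear t5 h13 h35 h36 h02 h03 h04 h05 e3 e4; omega
    clear t5 t6 h46
    have w3 : c3 = cA := by clear h36 h02 h03 h04 h05 e3 e4; omega
    have w3r : r3 = p := by clear h13 h35 h02 h03 h04 h05 e3 e4; omega
    clear h13 h35 h36 h02 h03 h04 h05 e4
    omega

private lemma aux_cross (n : ℕ) (hn : 6 ≤ n) (a r : ℕ → ℕ)
    (hE : ∀ i, i < n → r i ≠ r (i + 1))
    (hN : ∀ i j, i + 2 ≤ j → j ≤ n → a i ≠ a j → r i = r j)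
    (i : ℕ) (hi : i + 3 ≤ n) (hc : a i ≠ a (i + 1)) : False := by
  have D : ∀ i j, i + 2 ≤ j → j ≤ n → a i = a j ∨ r i = r j :=
    fun i j h1 h2 => or_iff_not_imp_left.mpr (hN i j h1 h2)
  have D' : ∀ i j, i + 2 ≤ j → j ≤ n → a j = a i ∨ r j = r i :=
    fun i j h1 h2 => (D i j h1 h2).imp Eq.symm Eq.symm
  rcases Nat.lt_or_ge i 3 with h3 | h3
  interval_cases i
  · -- i = 0, cross (0,1): far 3, 4, 6
    exact farL1 (hc : a 0 ≠ a 1) (hE 0 (by omega) : r 0 ≠ r 1)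
      (typ' (D' 0 3 (by omega) (by omega)) (D' 1 3 (by omega) (by omega)) hc (hE 0 (by omega)))
      (typ' (D' 0 4 (by omega) (by omega)) (D' 1 4 (by omega) (by omega)) hc (hE 0 (by omega)))
      (typ' (D' 0 6 (by omega) (by omega)) (D' 1 6 (by omega) (by omega)) hc (hE 0 (by omega)))
      (hE 3 (by omega) : r 3 ≠ r 4)
      (D 3 6 (by omega) (by omega)) (D 4 6 (by omega) (by omega))
  · -- i = 1, cross (1,2)
    exact farL2 (hc : a 1 ≠ a 2) (hE 1 (by omega) : r 1 ≠ r 2)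
      (typ' (D' 1 4 (by omega) (by omega)) (D' 2 4 (by omega) (by omega)) hc (hE 1 (by omega)))
      (typ' (D' 1 5 (by omega) (by omega)) (D' 2 5 (by omega) (by omega)) hc (hE 1 (by omega)))
      (typ' (D' 1 6 (by omega) (by omega)) (D' 2 6 (by omega) (by omega)) hc (hE 1 (by omega)))
      (D 4 6 (by omega) (by omega))
      (D' 1 3 (by omega) (by omega))
      (D 3 5 (by omega) (by omega))
      (D 3 6 (by omega) (by omega))
      (D 0 2 (by omega) (by omega))
      (D 0 3 (by omega) (by omega))
      (D 0 4 (by omega) (by omega))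
      (D 0 5 (by omega) (by omega))
      (hE 3 (by omega)) (hE 4 (by omega))
  · -- i = 2, cross (2,3): far 5, 6 and 0
    exact farL1 (hc : a 2 ≠ a 3) (hE 2 (by omega) : r 2 ≠ r 3)
      (typ' (D' 2 5 (by omega) (by omega)) (D' 3 5 (by omega) (by omega)) hc (hE 2 (by omega)))
      (typ' (D' 2 6 (by omega) (by omega)) (D' 3 6 (by omega) (by omega)) hc (hE 2 (by omega)))
      (typ' (D 0 2 (by omega) (by omega)) (D 0 3 (by omega) (by omega)) hc (hE 2 (by omega)))
      (hE 5 (by omega) : r 5 ≠ r 6)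
      (D' 0 5 (by omega) (by omega)) (D' 0 6 (by omega) (by omega))
  · -- generic i = m + 3: far m, m+1 and m+6
    obtain ⟨m, rfl⟩ : ∃ m, i = m + 3 := ⟨i - 3, by omega⟩
    exact farL1 (hc : a (m+3) ≠ a (m+4)) (hE (m+3) (by omega) : r (m+3) ≠ r (m+4))
      (typ' (D m (m+3) (by omega) (by omega)) (D m (m+4) (by omega) (by omega)) hc (hE (m+3) (by omega)))
      (typ' (D (m+1) (m+3) (by omega) (by omega)) (D (m+1) (m+4) (by omega) (by omega)) hc (hE (m+3) (by omega)))
      (typ' (D' (m+3) (m+6) (by omega) (by omega)) (D' (m+4) (m+6) (by omega) (by omega)) hc (hE (m+3) (by omega)))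
      (hE m (by omega) : r m ≠ r (m+1))
      (D m (m+6) (by omega) (by omega)) (D (m+1) (m+6) (by omega) (by omega))

private lemma no_cross (n : ℕ) (hn : 6 ≤ n) (a r : ℕ → ℕ)
    (hE : ∀ i, i < n → r i ≠ r (i + 1))
    (hN : ∀ i j, i + 2 ≤ j → j ≤ n → a i ≠ a j → r i = r j) :
    ∀ i, i < n → a i = a (i + 1) := by
  intro i hi
  by_contra hc
  rcases le_or_gt (i + 3) n with h | h
  · exact aux_cross n hn a r hE hN i h hc
  · refine aux_cross n hn (fun j => a (n - j)) (fun j => r (n - j)) ?_ ?_ (n - 1 - i) (by omega) ?_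
    · intro j hj
      have h1 := hE (n - (j + 1)) (by omega)
      have h2 : n - (j + 1) + 1 = n - j := by omega
      rw [h2] at h1
      exact fun hx => h1 hx.symm
    · intro p q hpq hqn hne
      exact (hN (n - q) (n - p) (by omega) (by omega) (Ne.symm hne)).symm
    · show a (n - (n - 1 - i)) ≠ a (n - (n - 1 - i + 1))
      have h1 : n - (n - 1 - i) = i + 1 := by omega
      have h2 : n - (n - 1 - i + 1) = i := by omega
      rw [h1, h2]
      exact fun hx => hc hx.symm

theorem long_induced_path_in_Ghat_in_one_component (k : ℕ) (hk : 2 ≤ k)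
    {n : ℕ} (hn : 6 ≤ n) (x : Fin (n + 1) → ℕ × ℕ)
    (hx : IsInducedPath (Ghat k) x) :
    ∀ i j : Fin (n + 1), (x i).1 = (x j).1 := by
  obtain ⟨hinj, hadj⟩ := hx
  have hmem : ∀ m : ℕ, min m n < n + 1 := fun m => by omega
  set a : ℕ → ℕ := fun m => (x ⟨min m n, hmem m⟩).1 with ha
  set r : ℕ → ℕ := fun m => (x ⟨min m n, hmem m⟩).2 % k with hr
  have hE : ∀ i, i < n → r i ≠ r (i + 1) := by
    intro i hi
    have hadj1 : (Ghat k).Adj (x ⟨min i n, hmem i⟩) (x ⟨min (i+1) n, hmem (i+1)⟩) := by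
      apply (hadj _ _).2
      show Nat.dist (min i n) (min (i+1) n) = 1
      simp only [Nat.dist]
      omega
    rcases hadj1 with ⟨_, hd⟩ | ⟨_, hm⟩
    · simp only [Nat.dist] at hd
      intro hrr
      have hmod : (x ⟨min i n, hmem i⟩).2 ≡ (x ⟨min (i+1) n, hmem (i+1)⟩).2 [MOD k] := hrr
      rcases Nat.lt_or_ge (x ⟨min i n, hmem i⟩).2 (x ⟨min (i+1) n, hmem (i+1)⟩).2 with hlt | hge
      · have hdvd := (Nat.modEq_iff_dvd' (Nat.le_of_lt hlt)).mp hmod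
        have := Nat.le_of_dvd (by omega) hdvd
        omega
      · have hdvd := (Nat.modEq_iff_dvd' hge).mp hmod.symm
        have := Nat.le_of_dvd (by omega) hdvd
        omega
    · exact hm
  have hN : ∀ i j, i + 2 ≤ j → j ≤ n → a i ≠ a j → r i = r j := by
    intro i j hij hjn hne
    have hna : ¬ (Ghat k).Adj (x ⟨min i n, hmem i⟩) (x ⟨min j n, hmem j⟩) := by
      intro hadj1
      have := (hadj _ _).1 hadj1
      simp only [Nat.dist] at this
      omega
    by_contra hrr
    apply hna
    exact Or.inr ⟨hne, hrr⟩
  have key := no_cross n hn a r hE hN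
  have const : ∀ m, m ≤ n → a m = a 0 := by
    intro m
    induction m with
    | zero => intro _; rfl
    | succ s ih =>
      intro hs
      rw [← key s (by omega)]
      exact ih (by omega)
  have hxa : ∀ i : Fin (n + 1), a i.val = (x i).1 := by
    intro i
    have heq : (⟨min i.val n, hmem i.val⟩ : Fin (n + 1)) = i := by
      apply Fin.ext
      show min i.val n = i.val
      have := i.isLt
      omega
    show (x ⟨min i.val n, hmem i.val⟩).1 = (x i).1
    rw [heq]
  intro i j
  rw [← hxa i, ← hxa j, const i.val (by omega), const j.val (by omega)]
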